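/- The classical total variation distance of the Breidbart outcome distributions on k qubits equals the trace distance: (1/2) Σ_{r∈{0,1}^k} |P_r(ρ₀^k) − P_r(ρ₁^k)| = (√2/2)^k, where P_r(ρ_b^k) − P_r(ρ₁₋b^k) = 2(−1)^{w(r)}(√2/4)^k. Consequently D(ρ₀^k, ρ₁^k) ≥ (√2/2)^k. -/

import Mathlib

open Matrix Kronecker ComplexOrder

/-- `|M| = √(Mᴴ M)`, the positive-semidefinite absolute value of a matrix. -/
noncomputable def matAbs {n : Type*} [Fintype n] [DecidableEq n]
    (M : Matrix n n ℂ) : Matrix n n ℂ :=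
  (Matrix.posSemidef_conjTranspose_mul_self M).1.eigenvectorUnitary.1 *
    diagonal ((↑) ∘ (Real.sqrt ·) ∘ (Matrix.posSemidef_conjTranspose_mul_self M).1.eigenvalues) *
    (star (Matrix.posSemidef_conjTranspose_mul_self M).1.eigenvectorUnitary : Matrix n n ℂ)

/-- Trace distance `D(A,B) = (1/2) Tr |A - B|`. -/
noncomputable def traceDist {n : Type*} [Fintype n] [DecidableEq n]
    (A B : Matrix n n ℂ) : ℝ :=
  (1 / 2) * (Matrix.trace (matAbs (A - B))).re

/-- |+⟩⟨+| -/
noncomputable def projPlus : Matrix (Fin 2) (Fin 2) ℂ := !![1/2, 1/2; 1/2, 1/2]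

/-- |1⟩⟨1| -/
noncomputable def projOne : Matrix (Fin 2) (Fin 2) ℂ := !![0, 0; 0, 1]

/-- |φ₀⟩⟨φ₀| = |+⟩⟨+| and |φ₁⟩⟨φ₁| = |1⟩⟨1| -/
noncomputable def phiProj : Fin 2 → Matrix (Fin 2) (Fin 2) ℂ := ![projPlus, projOne]

/-- σ_b^k : equal mixture over Ω_b^k of ⊗_j |φ_{i_j}⟩⟨φ_{i_j}|. -/
noncomputable def sigmaMix (b : Fin 2) (k : ℕ) :
    Matrix (Fin k → Fin 2) (Fin k → Fin 2) ℂ :=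
  ((2 : ℂ) ^ (k - 1))⁻¹ •
    ∑ i ∈ Finset.univ.filter (fun i : Fin k → Fin 2 => ∑ j, i j = b),
      Matrix.of fun x y => ∏ j, phiProj (i j) (x j) (y j)

/-- the conjugate-coding states |r⟩_s : |0⟩₀=|0⟩, |1⟩₀=|1⟩, |0⟩₁=|+⟩, |1⟩₁=|−⟩. -/
noncomputable def cket (r s : Fin 2) : Fin 2 → ℂ :=
  if s = 0 then (if r = 0 then ![1, 0] else ![0, 1])
  else (if r = 0 then ![(Real.sqrt 2 / 2 : ℂ), (Real.sqrt 2 / 2 : ℂ)]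
        else ![(Real.sqrt 2 / 2 : ℂ), -(Real.sqrt 2 / 2 : ℂ)])

/-- |r⟩_s⟨r| -/
noncomputable def cProj (r s : Fin 2) : Matrix (Fin 2) (Fin 2) ℂ :=
  Matrix.vecMulVec (cket r s) (star (cket r s))

/-- ρ_b^k : equal mixture over keys s ∈ {0,1}^k and r ∈ Ω_b^k of ⊗_j |r_j⟩_{s_j}⟨r_j|. -/
noncomputable def rhoMix (b : Fin 2) (k : ℕ) :
    Matrix (Fin k → Fin 2) (Fin k → Fin 2) ℂ :=
  ((2 : ℂ) ^ (2 * k - 1))⁻¹ •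
    ∑ r ∈ Finset.univ.filter (fun r : Fin k → Fin 2 => ∑ j, r j = b),
      ∑ s : Fin k → Fin 2,
        Matrix.of fun x y => ∏ j, cProj (r j) (s j) (x j) (y j)

/-- the Hadamard matrix -/
noncomputable def Hmat : Matrix (Fin 2) (Fin 2) ℂ :=
  ((Real.sqrt 2 / 2 : ℝ) : ℂ) • !![1, 1; 1, -1]

/-- H⁰ = I and H¹ = H -/
noncomputable def Hpow : Fin 2 → Matrix (Fin 2) (Fin 2) ℂ := ![1, Hmat]

/-- H^{i₁} ⊗ ⋯ ⊗ H^{i_k} -/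
noncomputable def Hten {k : ℕ} (i : Fin k → Fin 2) :
    Matrix (Fin k → Fin 2) (Fin k → Fin 2) ℂ :=
  Matrix.of fun x y => ∏ j, Hpow (i j) (x j) (y j)

/-- Breidbart basis vectors: |β₀⟩ = cos(π/8)|0⟩ + sin(π/8)|1⟩,
    |β₁⟩ = −sin(π/8)|0⟩ + cos(π/8)|1⟩. -/
noncomputable def bket : Fin 2 → Fin 2 → ℂ :=
  ![![(Real.cos (Real.pi / 8) : ℂ), (Real.sin (Real.pi / 8) : ℂ)],
    ![(-Real.sin (Real.pi / 8) : ℂ), (Real.cos (Real.pi / 8) : ℂ)]]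

/-- ⊗_j |β_{r_j}⟩ -/
noncomputable def bvec {k : ℕ} (r : Fin k → Fin 2) : (Fin k → Fin 2) → ℂ :=
  fun x => ∏ j, bket (r j) (x j)

/-- probability of Breidbart outcome string r on the state ρ. -/
noncomputable def breidProb {k : ℕ} (r : Fin k → Fin 2)
    (ρ : Matrix (Fin k → Fin 2) (Fin k → Fin 2) ℂ) : ℝ :=
  (dotProduct (star (bvec r)) (ρ.mulVec (bvec r))).re

/-- Hamming weight -/
def hw {k : ℕ} (r : Fin k → Fin 2) : ℕ :=
  (Finset.univ.filter fun j => r j = 1).card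


namespace BreidAux

open Matrix ComplexOrder

/-- N = M₀ - M₁ = √2·H -/
noncomputable def Nm : Matrix (Fin 2) (Fin 2) ℂ := !![1, 1; 1, -1]

/-- N^{⊗k} -/
noncomputable def Pm (k : ℕ) : Matrix (Fin k → Fin 2) (Fin k → Fin 2) ℂ :=
  Matrix.of fun x y => ∏ j, Nm (x j) (y j)

def eps : Fin 2 → ℂ := fun t => if t = 0 then 1 else -1

def epsR : Fin 2 → ℝ := fun t => if t = 0 then 1 else -1

lemma eps_add (a b : Fin 2) : eps (a + b) = eps a * eps b := by
  fin_cases a <;> fin_cases b <;> simp [eps, show (1:Fin 2)+1 = 0 from rfl]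

lemma prod_eps {k : ℕ} (r : Fin k → Fin 2) (s : Finset (Fin k)) :
    ∏ j ∈ s, eps (r j) = eps (∑ j ∈ s, r j) := by
  induction s using Finset.induction_on with
  | empty => simp [eps]
  | insert _ _ h ih => rw [Finset.prod_insert h, Finset.sum_insert h, eps_add, ih]

lemma sqrt2_mul : ((Real.sqrt 2 : ℝ) : ℂ) * ((Real.sqrt 2 : ℝ) : ℂ) = 2 := by
  rw [← Complex.ofReal_mul, Real.mul_self_sqrt (by norm_num)]; norm_num

lemma csum (u v : Fin 2) :
    ∑ t : Fin 2, eps t * (∑ s : Fin 2, cProj t s u v) = Nm u v := by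
  have h := sqrt2_mul
  fin_cases u <;> fin_cases v <;>
    simp [eps, Nm, cProj, cket, Matrix.vecMulVec, Fin.sum_univ_two, Complex.star_def,
      map_div₀, map_ofNat, Complex.conj_ofReal] <;>
    first
      | linear_combination h / 4
      | linear_combination -(h / 4)
      | linear_combination h / 2
      | linear_combination -(h / 2)
      | ring

lemma nsum (u v : Fin 2) :
    ∑ a : Fin 2, Nm a u * Nm a v = if u = v then 2 else 0 := by
  fin_cases u <;> fin_cases v <;> norm_num [Nm, Fin.sum_univ_two]

lemma delta_eq (k : ℕ) :
    rhoMix 0 k - rhoMix 1 k = ((2:ℂ)^(2*k-1))⁻¹ • Pm k := by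
  unfold rhoMix
  rw [← smul_sub]
  congr 1
  ext x y
  simp only [Matrix.sub_apply, Matrix.sum_apply, Matrix.of_apply, Pm]
  have hA : ∀ r : Fin k → Fin 2,
      (∑ s : Fin k → Fin 2, ∏ j, cProj (r j) (s j) (x j) (y j))
        = ∏ j, (∑ t : Fin 2, cProj (r j) t (x j) (y j)) :=
    fun r => (Fintype.prod_sum fun j t => cProj (r j) t (x j) (y j)).symm
  simp only [hA]
  rw [Finset.sum_filter, Finset.sum_filter, ← Finset.sum_sub_distrib]
  have step : ∀ r : Fin k → Fin 2,
      ((if (∑ j, r j) = 0 then (∏ j, ∑ t : Fin 2, cProj (r j) t (x j) (y j)) else 0)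
        - (if (∑ j, r j) = 1 then (∏ j, ∑ t : Fin 2, cProj (r j) t (x j) (y j)) else 0))
      = ∏ j, (eps (r j) * ∑ t : Fin 2, cProj (r j) t (x j) (y j)) := by
    intro r
    rw [Finset.prod_mul_distrib, prod_eps]
    rcases (show ∀ t : Fin 2, t = 0 ∨ t = 1 from by decide) (∑ j, r j) with h | h <;>
      rw [h] <;> simp [eps]
  rw [Finset.sum_congr rfl (fun r _ => step r),
    ← Fintype.prod_sum (fun j t => eps t * ∑ u : Fin 2, cProj t u (x j) (y j))]
  exact Finset.prod_congr rfl (fun j _ => csum (x j) (y j))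

lemma nm_star (a b : Fin 2) : (starRingEnd ℂ) (Nm a b) = Nm a b := by
  fin_cases a <;> fin_cases b <;> simp [Nm]

lemma PtP (k : ℕ) :
    (Pm k)ᴴ * Pm k = ((2:ℂ)^k) • (1 : Matrix (Fin k → Fin 2) (Fin k → Fin 2) ℂ) := by
  ext x y
  simp only [Matrix.mul_apply, Matrix.conjTranspose_apply, Pm, Matrix.of_apply,
    Matrix.smul_apply, Matrix.one_apply, smul_eq_mul]
  have h1 : ∀ z : Fin k → Fin 2,
      star (∏ j, Nm (z j) (x j)) * ∏ j, Nm (z j) (y j)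
        = ∏ j, (Nm (z j) (x j) * Nm (z j) (y j)) := by
    intro z
    rw [Complex.star_def, map_prod]
    rw [Finset.prod_congr rfl (fun j _ => nm_star (z j) (x j)), ← Finset.prod_mul_distrib]
  rw [Finset.sum_congr rfl (fun z _ => h1 z),
    ← Fintype.prod_sum (fun j t => Nm t (x j) * Nm t (y j)),
    Finset.prod_congr rfl (fun j _ => nsum (x j) (y j))]
  by_cases hxy : x = y
  · subst hxy
    simp [Finset.prod_const]
  · obtain ⟨j, hj⟩ := Function.ne_iff.1 hxy
    rw [if_neg hxy, mul_zero]
    exact Finset.prod_eq_zero (Finset.mem_univ j) (if_neg hj)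

lemma star_c (k : ℕ) : star (((2:ℂ)^(2*k-1))⁻¹) = ((2:ℂ)^(2*k-1))⁻¹ := by
  simp [star_inv₀, star_pow, Complex.star_def, map_ofNat]

lemma eig_const {n : Type*} [Fintype n] [DecidableEq n] {A : Matrix n n ℂ}
    (hA : A.IsHermitian) {c : ℝ} (h : A = (c:ℂ) • 1) (i : n) : hA.eigenvalues i = c := by
  subst h
  have := hA.conjStarAlgAut_star_eigenvectorUnitary
  rw [map_smul, map_one] at this
  have h2 := congrFun (congrFun this i) i
  simp at h2
  exact_mod_cast h2.symm

lemma absDelta (k : ℕ) :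
    matAbs (rhoMix 0 k - rhoMix 1 k)
      = ((((2:ℝ)^(2*k-1))⁻¹ * (Real.sqrt 2)^k : ℝ) : ℂ) • 1 := by
  set Δ := rhoMix 0 k - rhoMix 1 k with hΔ
  set t : ℝ := ((2:ℝ)^(2*k-1))⁻¹ * (Real.sqrt 2)^k with ht
  have ht0 : (0:ℝ) ≤ t := by positivity
  have hpsd : ((t:ℂ) • (1 : Matrix (Fin k → Fin 2) (Fin k → Fin 2) ℂ)).PosSemidef := by
    rw [show ((t:ℂ) • (1 : Matrix (Fin k → Fin 2) (Fin k → Fin 2) ℂ))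
        = Matrix.diagonal (fun _ => (t:ℂ)) from by
      ext i j
      by_cases h : i = j <;> simp [Matrix.diagonal_apply, Matrix.one_apply, h]]
    exact Matrix.PosSemidef.diagonal fun _ => Complex.zero_le_real.2 ht0
  have hsq : ((t:ℂ) • (1 : Matrix (Fin k → Fin 2) (Fin k → Fin 2) ℂ))^2 = Δᴴ * Δ := by
    rw [hΔ, delta_eq k, Matrix.conjTranspose_smul, star_c,
      Matrix.smul_mul, Matrix.mul_smul, PtP, smul_smul, smul_smul]
    rw [smul_pow, one_pow]
    congr 1
    have h2k : (Real.sqrt 2)^k * (Real.sqrt 2)^k = (2:ℝ)^k := by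
      rw [← mul_pow, Real.mul_self_sqrt (by norm_num)]
    have hr : t^2 = ((2:ℝ)^(2*k-1))⁻¹ * (((2:ℝ)^(2*k-1))⁻¹ * (2:ℝ)^k) := by
      rw [ht, ← h2k]; ring
    calc ((t:ℝ):ℂ)^2 = (((t^2 : ℝ)):ℂ) := by push_cast; ring
      _ = _ := by rw [hr]; push_cast; ring
  have hA : Δᴴ * Δ = ((t^2:ℝ):ℂ) • 1 := by rw [← hsq, smul_pow, one_pow, Complex.ofReal_pow]
  have hev := eig_const (posSemidef_conjTranspose_mul_self Δ).1 hA
  unfold matAbs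
  have hd : diagonal ((↑) ∘ (Real.sqrt ·) ∘ (posSemidef_conjTranspose_mul_self Δ).1.eigenvalues)
      = (t:ℂ) • (1 : Matrix (Fin k → Fin 2) (Fin k → Fin 2) ℂ) := by
    ext i j
    by_cases h : i = j <;> simp [diagonal_apply, one_apply, h, hev, Real.sqrt_sq ht0]
  rw [hd, Matrix.mul_smul, mul_one, Matrix.smul_mul,
    Unitary.mul_star_self_of_mem (posSemidef_conjTranspose_mul_self Δ).1.eigenvectorUnitary.2]

noncomputable def Q (t : Fin 2) : ℂ :=
  ∑ a : Fin 2, ∑ b : Fin 2, (starRingEnd ℂ) (bket t a) * (Nm a b * bket t b)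

lemma Qval (t : Fin 2) : Q t = ((epsR t * Real.sqrt 2 : ℝ) : ℂ) := by
  have key : Real.cos (Real.pi/8)^2 - Real.sin (Real.pi/8)^2
      + 2*(Real.sin (Real.pi/8) * Real.cos (Real.pi/8)) = Real.sqrt 2 := by
    have h1 : Real.cos (Real.pi/8)^2 - Real.sin (Real.pi/8)^2 = Real.cos (2*(Real.pi/8)) := by
      rw [Real.cos_two_mul]
      have := Real.sin_sq_add_cos_sq (Real.pi/8)
      linarith
    have h2 : (2:ℝ)*(Real.sin (Real.pi/8) * Real.cos (Real.pi/8)) = Real.sin (2*(Real.pi/8)) := by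
      rw [Real.sin_two_mul]; ring
    rw [h1, h2, show (2:ℝ)*(Real.pi/8) = Real.pi/4 from by ring,
      Real.cos_pi_div_four, Real.sin_pi_div_four]
    ring
  have keyC : ((Real.cos (Real.pi/8) : ℝ) : ℂ)^2 - ((Real.sin (Real.pi/8) : ℝ) : ℂ)^2
      + 2*(((Real.sin (Real.pi/8) : ℝ):ℂ) * ((Real.cos (Real.pi/8) : ℝ):ℂ))
      = ((Real.sqrt 2 : ℝ) : ℂ) := by exact_mod_cast key
  fin_cases t <;>
    simp [Q, epsR, bket, Nm, Fin.sum_univ_two, Complex.conj_ofReal,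
      -Real.cos_pi_div_eight, -Real.sin_pi_div_eight,
      -Complex.ofReal_cos, -Complex.ofReal_sin] <;>
    first
      | linear_combination keyC
      | linear_combination -keyC

lemma breid_diff (k : ℕ) (r : Fin k → Fin 2) :
    breidProb r (rhoMix 0 k) - breidProb r (rhoMix 1 k)
      = ((2:ℝ)^(2*k-1))⁻¹ * ((∏ j, epsR (r j)) * (Real.sqrt 2)^k) := by
  unfold breidProb
  rw [← Complex.sub_re, ← dotProduct_sub, ← Matrix.sub_mulVec, delta_eq k]
  rw [Matrix.smul_mulVec, dotProduct_smul]
  have hcore : dotProduct (star (bvec r)) ((Pm k).mulVec (bvec r))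
      = ∏ j, Q (r j) := by
    unfold dotProduct Matrix.mulVec
    simp only [Pi.star_apply, Pm, Matrix.of_apply, bvec, dotProduct]
    have hy : ∀ x : Fin k → Fin 2,
        (∑ y : Fin k → Fin 2, (∏ j, Nm (x j) (y j)) * ∏ j, bket (r j) (y j))
          = ∏ j, (∑ b : Fin 2, Nm (x j) b * bket (r j) b) := by
      intro x
      calc (∑ y : Fin k → Fin 2, (∏ j, Nm (x j) (y j)) * ∏ j, bket (r j) (y j))
          = ∑ y : Fin k → Fin 2, ∏ j, (Nm (x j) (y j) * bket (r j) (y j)) :=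
            Finset.sum_congr rfl fun y _ => (Finset.prod_mul_distrib).symm
        _ = ∏ j, (∑ b : Fin 2, Nm (x j) b * bket (r j) b) :=
            (Fintype.prod_sum fun j b => Nm (x j) b * bket (r j) b).symm
    have hx : ∀ x : Fin k → Fin 2,
        star (∏ j, bket (r j) (x j)) * ∏ j, (∑ b : Fin 2, Nm (x j) b * bket (r j) b)
          = ∏ j, ((starRingEnd ℂ) (bket (r j) (x j)) * ∑ b : Fin 2, Nm (x j) b * bket (r j) b) := by
      intro x
      rw [Complex.star_def, map_prod, ← Finset.prod_mul_distrib]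
    calc ∑ x : Fin k → Fin 2, star (∏ j, bket (r j) (x j)) *
            ∑ y : Fin k → Fin 2, (∏ j, Nm (x j) (y j)) * ∏ j, bket (r j) (y j)
        = ∑ x : Fin k → Fin 2,
            ∏ j, ((starRingEnd ℂ) (bket (r j) (x j)) * ∑ b : Fin 2, Nm (x j) b * bket (r j) b) := by
          exact Finset.sum_congr rfl fun x _ => by rw [hy x, hx x]
      _ = ∏ j, ∑ a : Fin 2, ((starRingEnd ℂ) (bket (r j) a) * ∑ b : Fin 2, Nm a b * bket (r j) b) :=
          (Fintype.prod_sum fun j a =>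
            (starRingEnd ℂ) (bket (r j) a) * ∑ b : Fin 2, Nm a b * bket (r j) b).symm
      _ = ∏ j, Q (r j) := by
          refine Finset.prod_congr rfl fun j _ => ?_
          rw [Q]
          exact Finset.sum_congr rfl fun a _ => by rw [Finset.mul_sum]
  rw [hcore, Finset.prod_congr rfl fun j _ => Qval (r j)]
  rw [show (∏ j, ((epsR (r j) * Real.sqrt 2 : ℝ) : ℂ))
      = (((∏ j, epsR (r j)) * (Real.sqrt 2)^k : ℝ) : ℂ) from by
    push_cast
    rw [Finset.prod_mul_distrib, Finset.prod_const]
    simp]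
  rw [show ((2:ℂ)^(2*k-1))⁻¹ = ((((2:ℝ)^(2*k-1))⁻¹ : ℝ) : ℂ) from by push_cast; ring]
  rw [smul_eq_mul, ← Complex.ofReal_mul, Complex.ofReal_re]

lemma arith (k : ℕ) (hk : 1 ≤ k) :
    (1/2) * ((2:ℝ)^k * (((2:ℝ)^(2*k-1))⁻¹ * (Real.sqrt 2)^k)) = (Real.sqrt 2 / 2)^k := by
  have h2 : (2:ℝ)^(2*k-1) * 2 = 2^(2*k) := by
    rw [← pow_succ]; congr 1; omega
  have hp : (2:ℝ)^(2*k) = 2^k * 2^k := by rw [two_mul, pow_add]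
  have e1 : ((2:ℝ)^(2*k-1))⁻¹ = 2 / (2^k * 2^k) := by
    rw [← hp, ← h2]
    field_simp
  rw [e1, div_pow]
  have hne : (2:ℝ)^k ≠ 0 := by positivity
  field_simp

end BreidAux

theorem breidbart_tv_and_lower_bound (k : ℕ) (hk : 1 ≤ k) :
    (1 / 2) * ∑ r : Fin k → Fin 2,
        |breidProb r (rhoMix 0 k) - breidProb r (rhoMix 1 k)| = (Real.sqrt 2 / 2) ^ k ∧
      (Real.sqrt 2 / 2) ^ k ≤ traceDist (rhoMix 0 k) (rhoMix 1 k) := by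
  classical
  open BreidAux in
  have habs : ∀ r : Fin k → Fin 2,
      |breidProb r (rhoMix 0 k) - breidProb r (rhoMix 1 k)|
        = ((2:ℝ)^(2*k-1))⁻¹ * (Real.sqrt 2)^k := by
    intro r
    rw [BreidAux.breid_diff k r, abs_mul, abs_mul, Finset.abs_prod]
    have h1 : ∀ j, |BreidAux.epsR (r j)| = 1 := by
      intro j; unfold BreidAux.epsR; split <;> norm_num
    rw [Finset.prod_congr rfl fun j _ => h1 j, Finset.prod_const_one, one_mul,
      abs_of_nonneg (by positivity), abs_of_nonneg (by positivity)]
  constructor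
  · rw [Finset.sum_congr rfl fun r _ => habs r, Finset.sum_const]
    rw [show (Finset.univ : Finset (Fin k → Fin 2)).card = 2^k from by
      simp [Fintype.card_fun]]
    rw [nsmul_eq_mul]
    push_cast
    exact BreidAux.arith k hk
  · refine le_of_eq ?_
    unfold traceDist
    rw [BreidAux.absDelta k, Matrix.trace_smul, Matrix.trace_one]
    rw [show (Fintype.card (Fin k → Fin 2) : ℂ) = ((2:ℝ)^k : ℝ) from by
      norm_num [Fintype.card_fun]]
    rw [smul_eq_mul, ← Complex.ofReal_mul, Complex.ofReal_re]
    rw [← BreidAux.arith k hk]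
    ring
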